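/- Let n be a positive integer and let f : [0,π] → ℝ be a continuous function. Then lim_{ρ→0⁺} sin^{1−n}(ρ) ∫_0^ρ f(r) sin^{n−1}(r) (cos r − cos ρ)^{-1/2} dr = (1/√2) B(1/2, n/2) · f(0), where B denotes the Euler Beta function B(x,y) = Γ(x)Γ(y)/Γ(x+y). -/

import Mathlib

open Real Set Filter Topology intervalIntegral MeasureTheory

/-- Real Beta integral formula. -/
lemma beta_real (p q : ℝ) (hp : 0 < p) (hq : 0 < q) :
    ∫ x in (0:ℝ)..1, x ^ (p - 1) * (1 - x) ^ (q - 1)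
      = Real.Gamma p * Real.Gamma q / Real.Gamma (p + q) := by
  have h := Complex.Gamma_mul_Gamma_eq_betaIntegral (s := (p:ℂ)) (t := (q:ℂ))
    (by simpa using hp) (by simpa using hq)
  have hβ : Complex.betaIntegral p q
      = ((∫ x in (0:ℝ)..1, x ^ (p - 1) * (1 - x) ^ (q - 1) : ℝ) : ℂ) := by
    rw [Complex.betaIntegral, ← intervalIntegral.integral_ofReal]
    apply intervalIntegral.integral_congr
    intro x hx
    rw [Set.uIcc_of_le zero_le_one] at hx
    have e1 : ((p:ℂ) - 1) = ((p - 1 : ℝ) : ℂ) := by push_cast; ring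
    have e2 : ((q:ℂ) - 1) = ((q - 1 : ℝ) : ℂ) := by push_cast; ring
    have e3 : (1 - (x:ℂ)) = ((1 - x : ℝ) : ℂ) := by push_cast; ring
    simp only [e1, e2, e3, ← Complex.ofReal_cpow hx.1,
      ← Complex.ofReal_cpow (by linarith [hx.2] : (0:ℝ) ≤ 1 - x), ← Complex.ofReal_mul]
  have hne : Complex.Gamma ((p:ℂ) + q) ≠ 0 := by
    rw [← Complex.ofReal_add, Complex.Gamma_ofReal]
    exact_mod_cast (Real.Gamma_pos_of_pos (by linarith)).ne'
  have : ((∫ x in (0:ℝ)..1, x ^ (p - 1) * (1 - x) ^ (q - 1) : ℝ) : ℂ)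
      = Complex.Gamma p * Complex.Gamma q / Complex.Gamma ((p:ℂ) + q) := by
    rw [← hβ, eq_div_iff hne]; linear_combination -h
  rw [Complex.Gamma_ofReal, Complex.Gamma_ofReal, ← Complex.ofReal_add, Complex.Gamma_ofReal] at this
  exact_mod_cast this

lemma sq_image_Ioo : (fun t : ℝ => t ^ 2) '' Ioo 0 1 = Ioo 0 1 := by
  ext x
  constructor
  · rintro ⟨t, ⟨ht0, ht1⟩, rfl⟩
    refine ⟨by positivity, ?_⟩
    dsimp only
    nlinarith
  · rintro ⟨hx0, hx1⟩
    exact ⟨Real.sqrt x, ⟨Real.sqrt_pos.2 hx0,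
      by rw [show (1:ℝ) = Real.sqrt 1 by simp]; exact Real.sqrt_lt_sqrt hx0.le hx1⟩,
      Real.sq_sqrt hx0.le⟩

lemma key_integral (n : ℕ) (hn : 0 < n)
    (hbeta : ∫ x in (0:ℝ)..1, x ^ ((n:ℝ)/2 - 1) * (1 - x) ^ ((1:ℝ)/2 - 1)
      = Real.Gamma ((n:ℝ)/2) * Real.Gamma (1/2) / Real.Gamma ((n:ℝ)/2 + 1/2)) :
    ∫ t in Ioo (0:ℝ) 1, t ^ ((n:ℝ) - 1) * (1 - t ^ 2) ^ (-(1:ℝ)/2)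
      = Real.Gamma ((n:ℝ)/2) * Real.Gamma (1/2) / Real.Gamma ((n:ℝ)/2 + 1/2) / 2 := by
  have hsub := MeasureTheory.integral_image_eq_integral_abs_deriv_smul
    (s := Ioo (0:ℝ) 1) (f := fun t => t ^ 2) (f' := fun t => 2 * t)
    measurableSet_Ioo
    (fun x _ => by simpa using ((hasDerivAt_pow 2 x).hasDerivWithinAt (s := Ioo 0 1)))
    (fun a ha b hb h => by
      simp only at h
      nlinarith [ha.1, ha.2, hb.1, hb.2])
    (fun x => x ^ ((n:ℝ)/2 - 1) * (1 - x) ^ ((1:ℝ)/2 - 1))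
  rw [sq_image_Ioo] at hsub
  have hcongr : ∫ t in Ioo (0:ℝ) 1,
      |2 * t| • ((t ^ 2) ^ ((n:ℝ)/2 - 1) * (1 - t ^ 2) ^ ((1:ℝ)/2 - 1))
      = ∫ t in Ioo (0:ℝ) 1, 2 * (t ^ ((n:ℝ) - 1) * (1 - t ^ 2) ^ (-(1:ℝ)/2)) := by
    apply MeasureTheory.setIntegral_congr_fun measurableSet_Ioo
    intro t ht
    obtain ⟨ht0, ht1⟩ := ht
    dsimp only
    have h2 : (t:ℝ) ^ 2 = t ^ ((2:ℕ):ℝ) := (Real.rpow_natCast t 2).symm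
    rw [smul_eq_mul, abs_of_pos (by linarith)]
    rw [show ((1:ℝ)/2 - 1) = -(1:ℝ)/2 by norm_num]
    rw [show (t ^ 2) ^ ((n:ℝ)/2 - 1) = t ^ ((n:ℝ) - 2) by
      rw [h2, ← Real.rpow_mul ht0.le]; congr 1; push_cast; ring]
    rw [show 2 * t * (t ^ ((n:ℝ) - 2) * (1 - t ^ 2) ^ (-(1:ℝ)/2))
        = 2 * ((t * t ^ ((n:ℝ) - 2)) * (1 - t ^ 2) ^ (-(1:ℝ)/2)) by ring]
    rw [show t * t ^ ((n:ℝ) - 2) = t ^ ((n:ℝ) - 1) by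
      nth_rewrite 1 [← Real.rpow_one t]
      rw [← Real.rpow_add ht0]; congr 1; ring]
  rw [hcongr, MeasureTheory.integral_const_mul] at hsub
  have : ∫ x in Ioo (0:ℝ) 1, x ^ ((n:ℝ)/2 - 1) * (1 - x) ^ ((1:ℝ)/2 - 1)
      = Real.Gamma ((n:ℝ)/2) * Real.Gamma (1/2) / Real.Gamma ((n:ℝ)/2 + 1/2) := by
    rw [← MeasureTheory.integral_Ioc_eq_integral_Ioo, ← intervalIntegral.integral_of_le zero_le_one]
    exact hbeta
  rw [this] at hsub
  linarith

lemma sin_div_tendsto : Tendsto (fun x : ℝ => Real.sin x / x) (𝓝[≠] (0:ℝ)) (𝓝 1) := by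
  have h := (Real.hasDerivAt_sin 0)
  rw [hasDerivAt_iff_tendsto_slope] at h
  simp only [Real.cos_zero] at h
  refine h.congr fun x => ?_
  rw [slope_def_field]
  simp

lemma sin_div_self_tendsto (c : ℝ) (hc : 0 < c) :
    Tendsto (fun ρ : ℝ => Real.sin (c * ρ) / (c * ρ)) (𝓝[>] (0:ℝ)) (𝓝 1) := by
  apply sin_div_tendsto.comp
  apply tendsto_nhdsWithin_of_tendsto_nhds_of_eventually_within
  · simpa using ((continuous_mul_left c).tendsto 0).mono_left nhdsWithin_le_nhds
  · filter_upwards [self_mem_nhdsWithin] with ρ (hρ : 0 < ρ)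
    exact (mul_pos hc hρ).ne'

lemma pointwise_lim (n : ℕ) (hn1 : (1:ℝ) ≤ n) (f : ℝ → ℝ)
    (hf : ContinuousOn f (Icc 0 π)) (t : ℝ) (ht0 : 0 < t) (ht1 : t < 1) :
    Tendsto (fun ρ : ℝ => Real.sin ρ ^ ((1:ℝ) - n) * ρ *
        (f (t*ρ) * Real.sin (t*ρ) ^ ((n:ℝ) - 1) * (Real.cos (t*ρ) - Real.cos ρ) ^ (-(1:ℝ)/2)))
      (𝓝[>] (0:ℝ))
      (𝓝 (f 0 * (t ^ ((n:ℝ)-1) * ((1 - t^2)/2) ^ (-(1:ℝ)/2)))) := by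
  have hπ := Real.pi_pos
  -- convergence of f (t * ρ)
  have h1 : Tendsto (fun ρ : ℝ => f (t*ρ)) (𝓝[>] (0:ℝ)) (𝓝 (f 0)) := by
    have hcont : Tendsto f (𝓝[Icc 0 π] 0) (𝓝 (f 0)) :=
      hf 0 ⟨le_refl 0, hπ.le⟩
    refine hcont.comp ?_
    apply tendsto_nhdsWithin_of_tendsto_nhds_of_eventually_within
    · simpa using ((continuous_mul_left t).tendsto 0).mono_left nhdsWithin_le_nhds
    · filter_upwards [Ioo_mem_nhdsGT_of_mem (Set.mem_Ico.2 ⟨le_refl (0:ℝ), hπ⟩)] with ρ hρ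
      exact ⟨by nlinarith [hρ.1], by nlinarith [hρ.1, hρ.2]⟩
  -- convergence of sin (tρ) / sin ρ
  have h2 : Tendsto (fun ρ : ℝ => Real.sin (t*ρ) / Real.sin ρ) (𝓝[>] (0:ℝ)) (𝓝 t) := by
    have hq : Tendsto (fun ρ : ℝ =>
        t * (Real.sin (t*ρ) / (t*ρ) * (Real.sin (1*ρ) / (1*ρ))⁻¹)) (𝓝[>] (0:ℝ))
        (𝓝 (t * (1 * 1⁻¹))) :=
      ((sin_div_self_tendsto t ht0).mul
        ((sin_div_self_tendsto 1 one_pos).inv₀ one_ne_zero)).const_mul t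
    simp only [inv_one, mul_one] at hq
    refine hq.congr' ?_
    filter_upwards [Ioo_mem_nhdsGT_of_mem (Set.mem_Ico.2 ⟨le_refl (0:ℝ), hπ⟩)] with ρ hρ
    have hρ0 : 0 < ρ := hρ.1
    have hsρ : 0 < Real.sin ρ := Real.sin_pos_of_pos_of_lt_pi hρ0 hρ.2
    rw [one_mul]
    field_simp
  -- convergence of (cos (tρ) - cos ρ) / ρ²
  have h3 : Tendsto (fun ρ : ℝ => (Real.cos (t*ρ) - Real.cos ρ) / ρ^2) (𝓝[>] (0:ℝ))
      (𝓝 ((1 - t^2)/2)) := by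
    set a : ℝ := (t+1)/2 with ha_def
    set b : ℝ := (1-t)/2 with hb_def
    have ha : 0 < a := by simp only [ha_def]; linarith
    have hb : 0 < b := by simp only [hb_def]; linarith
    have hq : Tendsto (fun ρ : ℝ =>
        (2*a*b) * (Real.sin (a*ρ) / (a*ρ) * (Real.sin (b*ρ) / (b*ρ)))) (𝓝[>] (0:ℝ))
        (𝓝 ((2*a*b) * (1 * 1))) :=
      ((sin_div_self_tendsto a ha).mul (sin_div_self_tendsto b hb)).const_mul (2*a*b)
    have hval : (2*a*b) * (1*1) = (1 - t^2)/2 := by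
      simp only [ha_def, hb_def]; ring
    rw [hval] at hq
    refine hq.congr' ?_
    filter_upwards [self_mem_nhdsWithin] with ρ (hρ0 : 0 < ρ)
    have e : Real.cos (t*ρ) - Real.cos ρ = 2 * Real.sin (a*ρ) * Real.sin (b*ρ) := by
      rw [Real.cos_sub_cos,
        show (t*ρ + ρ)/2 = a*ρ by simp only [ha_def]; ring,
        show (t*ρ - ρ)/2 = -(b*ρ) by simp only [hb_def]; ring,
        Real.sin_neg]
      ring
    rw [e]
    field_simp
  -- compose with rpow
  have h2' : Tendsto (fun ρ : ℝ => (Real.sin (t*ρ) / Real.sin ρ) ^ ((n:ℝ)-1))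
      (𝓝[>] (0:ℝ)) (𝓝 (t ^ ((n:ℝ)-1))) :=
    h2.rpow_const (Or.inl ht0.ne')
  have h3' : Tendsto (fun ρ : ℝ => ((Real.cos (t*ρ) - Real.cos ρ) / ρ^2) ^ (-(1:ℝ)/2))
      (𝓝[>] (0:ℝ)) (𝓝 (((1 - t^2)/2) ^ (-(1:ℝ)/2))) :=
    h3.rpow_const (Or.inl (by nlinarith [mul_lt_mul_of_pos_left ht1 ht0] : (0:ℝ) < (1 - t^2)/2).ne')
  have hmain := h1.mul (h2'.mul h3')
  refine hmain.congr' ?_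
  filter_upwards [Ioo_mem_nhdsGT_of_mem (Set.mem_Ico.2 ⟨le_refl (0:ℝ), hπ⟩)] with ρ hρ
  have hρ0 : 0 < ρ := hρ.1
  have hρπ : ρ < π := hρ.2
  have hsρ : 0 < Real.sin ρ := Real.sin_pos_of_pos_of_lt_pi hρ0 hρπ
  have htρ0 : 0 < t*ρ := mul_pos ht0 hρ0
  have htρρ : t*ρ < ρ := by nlinarith
  have hstρ : 0 ≤ Real.sin (t*ρ) :=
    Real.sin_nonneg_of_nonneg_of_le_pi htρ0.le (by linarith)
  have hD : 0 < Real.cos (t*ρ) - Real.cos ρ :=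
    sub_pos.2 (Real.cos_lt_cos_of_nonneg_of_le_pi htρ0.le hρπ.le htρρ)
  -- rewrite quotient rpows
  rw [Real.div_rpow hstρ hsρ.le, Real.div_rpow hD.le (by positivity)]
  rw [show ((ρ:ℝ)^2) ^ (-(1:ℝ)/2) = ρ⁻¹ by
    rw [← Real.rpow_natCast ρ 2, ← Real.rpow_mul hρ0.le]
    norm_num [Real.rpow_neg_one]]
  rw [show Real.sin ρ ^ ((1:ℝ) - n) = (Real.sin ρ ^ ((n:ℝ)-1))⁻¹ by
    rw [show (1:ℝ) - n = -((n:ℝ)-1) by ring, Real.rpow_neg hsρ.le]]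
  have hsρpow : Real.sin ρ ^ ((n:ℝ)-1) ≠ 0 := (Real.rpow_pos_of_pos hsρ _).ne'
  field_simp

lemma bound_ineq (n : ℕ) (hn1 : (1:ℝ) ≤ n) (f : ℝ → ℝ) (M : ℝ)
    (hM : ∀ x ∈ Icc 0 π, |f x| ≤ M) {ρ t : ℝ} (hρ : ρ ∈ Ioo 0 (π/2)) (ht : t ∈ Ioo (0:ℝ) 1) :
    |Real.sin ρ ^ ((1:ℝ)-n) * ρ *
        (f (t*ρ) * Real.sin (t*ρ) ^ ((n:ℝ)-1) * (Real.cos (t*ρ) - Real.cos ρ) ^ (-(1:ℝ)/2))|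
      ≤ ((2/π)^((1:ℝ)-n) * M * (2/π^2)^(-(1:ℝ)/2)) * (1 - t^2)^(-(1:ℝ)/2) := by
  have hπ := Real.pi_pos
  obtain ⟨hρ0, hρ2⟩ := hρ
  obtain ⟨ht0, ht1⟩ := ht
  have hρπ : ρ < π := by linarith
  have hsρ : 0 < Real.sin ρ := Real.sin_pos_of_pos_of_lt_pi hρ0 hρπ
  have htρ0 : 0 < t*ρ := mul_pos ht0 hρ0
  have htρρ : t*ρ < ρ := by nlinarith
  have hstρ : 0 ≤ Real.sin (t*ρ) :=
    Real.sin_nonneg_of_nonneg_of_le_pi htρ0.le (by linarith)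
  have hDpos : 0 < Real.cos (t*ρ) - Real.cos ρ :=
    sub_pos.2 (Real.cos_lt_cos_of_nonneg_of_le_pi htρ0.le hρπ.le htρρ)
  have ht2 : t^2 < 1 := by nlinarith
  -- lower bound for cos (tρ) - cos ρ
  have hD : (2/π^2) * ((1-t^2) * ρ^2) ≤ Real.cos (t*ρ) - Real.cos ρ := by
    set a : ℝ := (t+1)/2 with ha_def
    set b : ℝ := (1-t)/2 with hb_def
    have ha : 0 < a := by simp only [ha_def]; linarith
    have hb : 0 < b := by simp only [hb_def]; linarith
    have e : Real.cos (t*ρ) - Real.cos ρ = 2 * Real.sin (a*ρ) * Real.sin (b*ρ) := by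
      rw [Real.cos_sub_cos,
        show (t*ρ + ρ)/2 = a*ρ by simp only [ha_def]; ring,
        show (t*ρ - ρ)/2 = -(b*ρ) by simp only [hb_def]; ring,
        Real.sin_neg]
      ring
    have s1 : 2/π * (a*ρ) ≤ Real.sin (a*ρ) := by
      apply Real.mul_le_sin (by positivity)
      simp only [ha_def]; nlinarith
    have s2 : 2/π * (b*ρ) ≤ Real.sin (b*ρ) := by
      apply Real.mul_le_sin (by positivity)
      simp only [hb_def]; nlinarith
    have hmul : (2/π * (a*ρ)) * (2/π * (b*ρ)) ≤ Real.sin (a*ρ) * Real.sin (b*ρ) :=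
      mul_le_mul s1 s2 (by positivity) (le_trans (by positivity) s1)
    have : (2/π * (a*ρ)) * (2/π * (b*ρ)) = (2/π^2) * ((1-t^2) * ρ^2) / 2 := by
      simp only [ha_def, hb_def]; field_simp; ring
    rw [e]; linarith [this ▸ hmul]
  -- rewrite |·| as the product itself
  have habs : |Real.sin ρ ^ ((1:ℝ)-n) * ρ *
      (f (t*ρ) * Real.sin (t*ρ) ^ ((n:ℝ)-1) * (Real.cos (t*ρ) - Real.cos ρ) ^ (-(1:ℝ)/2))|
      = Real.sin ρ ^ ((1:ℝ)-n) * ρ *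
        (|f (t*ρ)| * Real.sin (t*ρ) ^ ((n:ℝ)-1) * (Real.cos (t*ρ) - Real.cos ρ) ^ (-(1:ℝ)/2)) := by
    simp only [abs_mul]
    rw [abs_of_pos (Real.rpow_pos_of_pos hsρ _), abs_of_pos hρ0,
      abs_of_nonneg (Real.rpow_nonneg hstρ _), abs_of_pos (Real.rpow_pos_of_pos hDpos _)]
  rw [habs]
  have p1 : Real.sin ρ ^ ((1:ℝ)-n) ≤ (2/π)^((1:ℝ)-n) * ρ^((1:ℝ)-n) := by
    rw [← Real.mul_rpow (by positivity) hρ0.le]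
    exact Real.rpow_le_rpow_of_nonpos (by positivity)
      (Real.mul_le_sin hρ0.le hρ2.le) (by linarith)
  have p2 : Real.sin (t*ρ) ^ ((n:ℝ)-1) ≤ ρ^((n:ℝ)-1) :=
    Real.rpow_le_rpow hstρ ((Real.sin_le htρ0.le).trans htρρ.le) (by linarith)
  have p4 : |f (t*ρ)| ≤ M := hM _ ⟨htρ0.le, by linarith⟩
  have hMnn : (0:ℝ) ≤ M := le_trans (abs_nonneg _) p4
  have p3 : (Real.cos (t*ρ) - Real.cos ρ) ^ (-(1:ℝ)/2)
      ≤ (2/π^2)^(-(1:ℝ)/2) * ((1-t^2)^(-(1:ℝ)/2) * (ρ^2)^(-(1:ℝ)/2)) := by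
    rw [← Real.mul_rpow (by nlinarith) (by positivity), ← Real.mul_rpow (by positivity) (by nlinarith)]
    exact Real.rpow_le_rpow_of_nonpos
      (mul_pos (by positivity) (mul_pos (by linarith) (by positivity))) hD (by norm_num)
  calc Real.sin ρ ^ ((1:ℝ)-n) * ρ *
        (|f (t*ρ)| * Real.sin (t*ρ) ^ ((n:ℝ)-1) * (Real.cos (t*ρ) - Real.cos ρ) ^ (-(1:ℝ)/2))
      ≤ ((2/π)^((1:ℝ)-n) * ρ^((1:ℝ)-n)) * ρ *
        (M * ρ^((n:ℝ)-1) * ((2/π^2)^(-(1:ℝ)/2) * ((1-t^2)^(-(1:ℝ)/2) * (ρ^2)^(-(1:ℝ)/2)))) := by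
        gcongr <;> first | assumption | positivity
    _ = ((2/π)^((1:ℝ)-n) * M * (2/π^2)^(-(1:ℝ)/2)) * (1 - t^2)^(-(1:ℝ)/2) := by
        rw [show ((ρ:ℝ)^2) ^ (-(1:ℝ)/2) = ρ⁻¹ by
          rw [← Real.rpow_natCast ρ 2, ← Real.rpow_mul hρ0.le]
          norm_num [Real.rpow_neg_one]]
        rw [show ((2/π)^((1:ℝ)-n) * ρ^((1:ℝ)-n)) * ρ *
            (M * ρ^((n:ℝ)-1) * ((2/π^2)^(-(1:ℝ)/2) * ((1-t^2)^(-(1:ℝ)/2) * ρ⁻¹)))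
            = ((2/π)^((1:ℝ)-n) * M * (2/π^2)^(-(1:ℝ)/2) * (1-t^2)^(-(1:ℝ)/2))
              * (ρ^((1:ℝ)-n) * ρ^((n:ℝ)-1)) * (ρ * ρ⁻¹) from by ring]
        rw [← Real.rpow_add hρ0, mul_inv_cancel₀ hρ0.ne']
        norm_num

lemma one_sub_sq_integrable :
    IntegrableOn (fun t : ℝ => (1 - t^2) ^ (-(1:ℝ)/2)) (Ioo 0 1) := by
  have hg : IntegrableOn (fun t : ℝ => (1 - t) ^ (-(1:ℝ)/2)) (Ioo 0 1) := by
    have h1 : IntervalIntegrable (fun x : ℝ => x ^ (-(1:ℝ)/2)) volume 0 1 :=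
      intervalIntegral.intervalIntegrable_rpow' (by norm_num)
    have h2 := h1.comp_sub_left 1
    rw [show (1:ℝ) - 1 = 0 by norm_num, sub_zero] at h2
    exact ((intervalIntegrable_iff_integrableOn_Ioc_of_le zero_le_one).1 h2.symm).mono_set
      Ioo_subset_Ioc_self
  have hmeas : AEStronglyMeasurable (fun t : ℝ => (1 - t^2) ^ (-(1:ℝ)/2))
      (volume.restrict (Ioo (0:ℝ) 1)) := by
    apply ContinuousOn.aestronglyMeasurable _ measurableSet_Ioo
    apply ContinuousOn.rpow_const ((continuousOn_const.sub (continuous_pow 2).continuousOn))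
    intro t ht
    exact Or.inl (by nlinarith [ht.1, ht.2] : (1:ℝ) - t^2 ≠ 0)
  refine hg.mono' hmeas ?_
  rw [ae_restrict_iff' measurableSet_Ioo]
  refine Filter.Eventually.of_forall fun t ht => ?_
  obtain ⟨ht0, ht1⟩ := ht
  have h1t : 0 < 1 - t := by linarith
  have h1t2 : 0 < 1 - t^2 := by nlinarith
  rw [Real.norm_eq_abs, abs_of_pos (Real.rpow_pos_of_pos h1t2 _)]
  exact Real.rpow_le_rpow_of_nonpos h1t (by nlinarith) (by norm_num)

/-- Delta-function limit of the spherical integral transform: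
`lim_{ρ→0⁺} sin^{1-n}(ρ) ∫_0^ρ f(r) sin^{n-1}(r) (cos r - cos ρ)^{-1/2} dr
  = (1/√2) B(1/2, n/2) f(0)`, where `B(x,y) = Γ(x)Γ(y)/Γ(x+y)`. -/
theorem spherical_delta_limit (n : ℕ) (hn : 0 < n) (f : ℝ → ℝ)
    (hf : ContinuousOn f (Set.Icc 0 π)) :
    Tendsto
      (fun ρ : ℝ => Real.sin ρ ^ ((1 : ℝ) - n) *
        ∫ r in (0 : ℝ)..ρ,
          f r * Real.sin r ^ ((n : ℝ) - 1) * (Real.cos r - Real.cos ρ) ^ (-(1 : ℝ) / 2))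
      (𝓝[>] 0)
      (𝓝 (1 / Real.sqrt 2 *
        (Real.Gamma (1 / 2) * Real.Gamma ((n : ℝ) / 2) /
          Real.Gamma (1 / 2 + (n : ℝ) / 2)) * f 0)) := by
  have hπ := Real.pi_pos
  have hn1 : (1:ℝ) ≤ n := by exact_mod_cast hn
  obtain ⟨M, hMn⟩ := isCompact_Icc.exists_bound_of_continuousOn hf
  have hM : ∀ x ∈ Icc 0 π, |f x| ≤ M := by simpa [Real.norm_eq_abs] using hMn
  have hkey := key_integral n hn
    (beta_real ((n:ℝ)/2) (1/2) (by positivity) (by norm_num))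
  set C' : ℝ := Real.Gamma ((n:ℝ)/2) * Real.Gamma (1/2) / Real.Gamma ((n:ℝ)/2 + 1/2) with hC'
  -- dominated convergence
  have hmeas : ∀ᶠ ρ in 𝓝[>] (0:ℝ), AEStronglyMeasurable
      (fun t : ℝ => Real.sin ρ ^ ((1:ℝ) - n) * ρ *
        (f (t*ρ) * Real.sin (t*ρ) ^ ((n:ℝ) - 1) * (Real.cos (t*ρ) - Real.cos ρ) ^ (-(1:ℝ)/2)))
      (volume.restrict (Ioo 0 1)) := by
    filter_upwards [Ioo_mem_nhdsGT_of_mem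
      (Set.mem_Ico.2 ⟨le_refl (0:ℝ), Real.pi_div_two_pos⟩)] with ρ hρ
    obtain ⟨hρ0, hρ2⟩ := hρ
    apply ContinuousOn.aestronglyMeasurable _ measurableSet_Ioo
    refine ContinuousOn.mul continuousOn_const (ContinuousOn.mul (ContinuousOn.mul ?_ ?_) ?_)
    · exact hf.comp (continuous_mul_right ρ).continuousOn
        (fun t ht => ⟨by nlinarith [ht.1, ht.2], by nlinarith [ht.1, ht.2]⟩)
    · exact ((Real.continuous_sin.comp (continuous_mul_right ρ)).rpow_const
        (fun x => Or.inr (by linarith))).continuousOn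
    · refine ContinuousOn.rpow_const
        (((Real.continuous_cos.comp (continuous_mul_right ρ)).continuousOn).sub
          continuousOn_const) (fun t ht => Or.inl ?_)
      have : t*ρ < ρ := by nlinarith [ht.1, ht.2]
      exact (sub_pos.2 (Real.cos_lt_cos_of_nonneg_of_le_pi
        (by nlinarith [ht.1]) (by linarith) this)).ne'
  have hbound : ∀ᶠ ρ in 𝓝[>] (0:ℝ), ∀ᵐ t ∂(volume.restrict (Ioo (0:ℝ) 1)),
      ‖Real.sin ρ ^ ((1:ℝ) - n) * ρ *
        (f (t*ρ) * Real.sin (t*ρ) ^ ((n:ℝ) - 1) * (Real.cos (t*ρ) - Real.cos ρ) ^ (-(1:ℝ)/2))‖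
      ≤ ((2/π)^((1:ℝ)-n) * M * (2/π^2)^(-(1:ℝ)/2)) * (1 - t^2)^(-(1:ℝ)/2) := by
    filter_upwards [Ioo_mem_nhdsGT_of_mem
      (Set.mem_Ico.2 ⟨le_refl (0:ℝ), Real.pi_div_two_pos⟩)] with ρ hρ
    rw [ae_restrict_iff' measurableSet_Ioo]
    refine Filter.Eventually.of_forall fun t ht => ?_
    rw [Real.norm_eq_abs]
    exact bound_ineq n hn1 f M hM hρ ht
  have hbint : Integrable
      (fun t : ℝ => ((2/π)^((1:ℝ)-n) * M * (2/π^2)^(-(1:ℝ)/2)) * (1 - t^2)^(-(1:ℝ)/2))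
      (volume.restrict (Ioo (0:ℝ) 1)) :=
    one_sub_sq_integrable.const_mul _
  have hlim : ∀ᵐ t ∂(volume.restrict (Ioo (0:ℝ) 1)),
      Tendsto (fun ρ : ℝ => Real.sin ρ ^ ((1:ℝ) - n) * ρ *
        (f (t*ρ) * Real.sin (t*ρ) ^ ((n:ℝ) - 1) * (Real.cos (t*ρ) - Real.cos ρ) ^ (-(1:ℝ)/2)))
        (𝓝[>] (0:ℝ)) (𝓝 (f 0 * (t ^ ((n:ℝ)-1) * ((1 - t^2)/2) ^ (-(1:ℝ)/2)))) := by
    rw [ae_restrict_iff' measurableSet_Ioo]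
    exact Filter.Eventually.of_forall fun t ht => pointwise_lim n hn1 f hf t ht.1 ht.2
  have hDCT := MeasureTheory.tendsto_integral_filter_of_dominated_convergence
    _ hmeas hbound hbint hlim
  -- identify the limit value
  have hval : ∫ t in Ioo (0:ℝ) 1, f 0 * (t ^ ((n:ℝ)-1) * ((1 - t^2)/2) ^ (-(1:ℝ)/2))
      = 1 / Real.sqrt 2 *
        (Real.Gamma (1/2) * Real.Gamma ((n:ℝ)/2) / Real.Gamma (1/2 + (n:ℝ)/2)) * f 0 := by
    have hs2 : Real.sqrt 2 * Real.sqrt 2 = 2 := Real.mul_self_sqrt (by norm_num)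
    have hs2' : Real.sqrt 2 ≠ 0 := by positivity
    have h2pow : ((2:ℝ))^(-(1:ℝ)/2) = (Real.sqrt 2)⁻¹ := by
      rw [show (-(1:ℝ)/2) = -(1/2) by norm_num, Real.rpow_neg (by norm_num),
        ← Real.sqrt_eq_rpow]
    have hcongr : ∫ t in Ioo (0:ℝ) 1, f 0 * (t ^ ((n:ℝ)-1) * ((1 - t^2)/2) ^ (-(1:ℝ)/2))
        = ∫ t in Ioo (0:ℝ) 1,
          (f 0 * Real.sqrt 2) * (t ^ ((n:ℝ)-1) * (1 - t^2) ^ (-(1:ℝ)/2)) := by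
      refine MeasureTheory.setIntegral_congr_fun measurableSet_Ioo fun t ht => ?_
      obtain ⟨ht0, ht1⟩ := ht
      have h1t2 : (0:ℝ) ≤ 1 - t^2 := by nlinarith
      rw [Real.div_rpow h1t2 (by norm_num), h2pow, div_eq_mul_inv, inv_inv]
      ring
    rw [hcongr, MeasureTheory.integral_const_mul, hkey]
    rw [show Real.Gamma (1/2) * Real.Gamma ((n:ℝ)/2) / Real.Gamma (1/2 + (n:ℝ)/2)
        = Real.Gamma ((n:ℝ)/2) * Real.Gamma (1/2) / Real.Gamma ((n:ℝ)/2 + 1/2) by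
      rw [mul_comm, add_comm]]
    have hΓ : Real.Gamma ((n:ℝ)/2 + 1/2) ≠ 0 :=
      (Real.Gamma_pos_of_pos (by positivity)).ne'
    field_simp [hΓ]
    ring_nf
    rw [Real.sq_sqrt (by norm_num : (0:ℝ) ≤ 2)]
    have hΓ2 : Real.Gamma (1/2 + (n:ℝ)*(1/2)) ≠ 0 :=
      (Real.Gamma_pos_of_pos (by positivity)).ne'
    field_simp [hΓ2]
    have hΓ3 : Real.Gamma ((1 + (n:ℝ))/2) ≠ 0 :=
      (Real.Gamma_pos_of_pos (by positivity)).ne'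
    have hC'G : C' * Real.Gamma ((1 + (n:ℝ))/2) = Real.Gamma ((n:ℝ)/2) * Real.Gamma (1/2) := by
      rw [hC', show (n:ℝ)/2 + 1/2 = (1 + (n:ℝ))/2 by ring]
      exact div_mul_cancel₀ _ hΓ3
    rw [mul_assoc, hC'G]
    ring
  rw [← hval]
  -- change of variables: equality of the two functions near 0⁺
  refine Tendsto.congr' ?_ hDCT
  filter_upwards [self_mem_nhdsWithin] with ρ (hρ0 : (0:ℝ) < ρ)
  have hcv := intervalIntegral.integral_comp_mul_right (a := (0:ℝ)) (b := 1)
    (fun r => f r * Real.sin r ^ ((n:ℝ) - 1) * (Real.cos r - Real.cos ρ) ^ (-(1:ℝ)/2)) hρ0.ne'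
  rw [zero_mul, one_mul, smul_eq_mul] at hcv
  calc (∫ t in Ioo (0:ℝ) 1, Real.sin ρ ^ ((1:ℝ) - n) * ρ *
        (f (t*ρ) * Real.sin (t*ρ) ^ ((n:ℝ) - 1) * (Real.cos (t*ρ) - Real.cos ρ) ^ (-(1:ℝ)/2)))
      = ∫ t in (0:ℝ)..1, Real.sin ρ ^ ((1:ℝ) - n) * ρ *
        (f (t*ρ) * Real.sin (t*ρ) ^ ((n:ℝ) - 1) * (Real.cos (t*ρ) - Real.cos ρ) ^ (-(1:ℝ)/2)) := by
        rw [intervalIntegral.integral_of_le zero_le_one,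
          MeasureTheory.integral_Ioc_eq_integral_Ioo]
    _ = Real.sin ρ ^ ((1:ℝ) - n) * ρ *
        ∫ t in (0:ℝ)..1,
          f (t*ρ) * Real.sin (t*ρ) ^ ((n:ℝ) - 1) * (Real.cos (t*ρ) - Real.cos ρ) ^ (-(1:ℝ)/2) :=
        intervalIntegral.integral_const_mul _ _
    _ = Real.sin ρ ^ ((1:ℝ) - n) * ρ * (ρ⁻¹ *
        ∫ r in (0:ℝ)..ρ,
          f r * Real.sin r ^ ((n:ℝ) - 1) * (Real.cos r - Real.cos ρ) ^ (-(1:ℝ)/2)) := by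
        rw [hcv]
    _ = Real.sin ρ ^ ((1:ℝ) - n) *
        ∫ r in (0:ℝ)..ρ,
          f r * Real.sin r ^ ((n:ℝ) - 1) * (Real.cos r - Real.cos ρ) ^ (-(1:ℝ)/2) := by
        field_simp
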